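/- Let K be a compact Hausdorff space, w ∈ C(K), φ a homeomorphism of K onto itself, and T the weighted composition operator (Tf)(k) = w(k) f(φ(k)) on C(K). If the zero set Z = {k ∈ K : w(k) = 0} is finite and every point of Z is isolated in K, then T is Fredholm of index 0. -/

import Mathlib

open Classical in
private lemma indicator_cont' {K : Type*} [TopologicalSpace K] [T2Space K] (x : K)
    (hx : IsOpen ({x} : Set K)) :
    Continuous (fun y : K => if y = x then (1:ℂ) else 0) := by
  rw [continuous_iff_continuousAt]
  intro y
  by_cases hy : y = x
  · subst hy
    apply ContinuousAt.congr (f := fun _ => (1:ℂ)) continuousAt_const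
    filter_upwards [hx.mem_nhds rfl] with z hz
    simp_all
  · apply ContinuousAt.congr (f := fun _ => (0:ℂ)) continuousAt_const
    have : ({x}ᶜ : Set K) ∈ nhds y := (isClosed_singleton.isOpen_compl).mem_nhds hy
    filter_upwards [this] with z hz
    simp_all

open Classical in
private noncomputable def ind' {K : Type*} [TopologicalSpace K] [T2Space K] (x : K)
    (hx : IsOpen ({x} : Set K)) : C(K, ℂ) :=
  ⟨fun y => if y = x then (1:ℂ) else 0, indicator_cont' x hx⟩

theorem stmt1 {K : Type*} [TopologicalSpace K] [CompactSpace K] [T2Space K]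
    (φ : K ≃ₜ K) (w : C(K, ℂ))
    (T : C(K, ℂ) →L[ℂ] C(K, ℂ))
    (hT : ∀ f : C(K, ℂ), ∀ k : K, T f k = w k * f (φ k))
    (hZfin : {k : K | w k = 0}.Finite)
    (hZiso : ∀ k : K, w k = 0 → IsOpen ({k} : Set K)) :
    IsClosed (LinearMap.range (T : C(K, ℂ) →ₗ[ℂ] C(K, ℂ)) : Set C(K, ℂ)) ∧
      FiniteDimensional ℂ (LinearMap.ker (T : C(K, ℂ) →ₗ[ℂ] C(K, ℂ))) ∧
      FiniteDimensional ℂ (C(K, ℂ) ⧸ LinearMap.range (T : C(K, ℂ) →ₗ[ℂ] C(K, ℂ))) ∧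
      Module.finrank ℂ (LinearMap.ker (T : C(K, ℂ) →ₗ[ℂ] C(K, ℂ))) =
        Module.finrank ℂ (C(K, ℂ) ⧸ LinearMap.range (T : C(K, ℂ) →ₗ[ℂ] C(K, ℂ))) := by
  classical
  set Z : Set K := {k : K | w k = 0} with hZdef
  haveI : Fintype Z := hZfin.fintype
  -- isolated points
  have hiso : ∀ z : Z, IsOpen ({(z : K)} : Set K) := fun z => hZiso z z.2
  have hisoφ : ∀ z : Z, IsOpen ({φ (z : K)} : Set K) := by
    intro z
    have := φ.isOpenMap _ (hiso z)
    simpa [Set.image_singleton] using this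
  -- evaluation maps
  set Ev : C(K, ℂ) →ₗ[ℂ] (Z → ℂ) :=
    { toFun := fun f z => f z
      map_add' := by intro f g; ext z; simp
      map_smul' := by intro c f; ext z; simp }
  set Ev' : C(K, ℂ) →ₗ[ℂ] (Z → ℂ) :=
    { toFun := fun f z => f (φ z)
      map_add' := by intro f g; ext z; simp
      map_smul' := by intro c f; ext z; simp }
  -- sums of indicators
  have sum_apply : ∀ (v : Z → ℂ) (x : K),
      ((∑ z : Z, v z • ind' (φ (z : K)) (hisoφ z)) : C(K,ℂ)) x
        = ∑ z : Z, v z * (if x = φ (z:K) then 1 else 0) := by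
    intro v x
    rw [ContinuousMap.coe_sum]
    simp [ind', Finset.sum_apply]
  have sum_apply2 : ∀ (v : Z → ℂ) (x : K),
      ((∑ z : Z, v z • ind' (z : K) (hiso z)) : C(K,ℂ)) x
        = ∑ z : Z, v z * (if x = (z:K) then 1 else 0) := by
    intro v x
    rw [ContinuousMap.coe_sum]
    simp [ind', Finset.sum_apply]
  -- range characterization
  have hrange : LinearMap.range (T : C(K, ℂ) →ₗ[ℂ] C(K, ℂ)) = LinearMap.ker Ev := by
    apply le_antisymm
    · rintro g ⟨f, rfl⟩
      have : ∀ z : Z, (T f) (z : K) = 0 := by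
        intro z
        rw [hT f]
        have : w (z : K) = 0 := z.2
        simp [this]
      show Ev (T f) = 0
      funext z
      exact this z
    · intro g hg
      have hg0 : ∀ z : Z, g (z : K) = 0 := fun z => congrFun hg z
      -- quotient function h = g / w
      have hcont : Continuous (fun k : K => g k / w k) := by
        rw [continuous_iff_continuousAt]
        intro y
        by_cases hy : w y = 0
        · apply ContinuousAt.congr (f := fun _ => g y / w y) continuousAt_const
          filter_upwards [(hZiso y hy).mem_nhds rfl] with z hz
          simp_all
        · exact (g.continuous.continuousAt).div (w.continuous.continuousAt) hy
      set h : C(K, ℂ) := ⟨fun k => g k / w k, hcont⟩ with hh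
      refine ⟨h.comp (φ.symm : C(K, K)), ?_⟩
      ext k
      rw [ContinuousLinearMap.coe_coe, hT]
      show w k * h (φ.symm (φ k)) = g k
      rw [φ.symm_apply_apply]
      show w k * (g k / w k) = g k
      by_cases hk : w k = 0
      · have : k ∈ Z := hk
        simp [hk, hg0 ⟨k, this⟩]
      · field_simp
  -- Ev surjective
  have hEvSurj : Function.Surjective Ev := by
    intro v
    refine ⟨∑ z : Z, v z • ind' (z : K) (hiso z), ?_⟩
    funext z
    show ((∑ z : Z, v z • ind' (z : K) (hiso z)) : C(K,ℂ)) (z:K) = v z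
    rw [sum_apply2]
    rw [Finset.sum_eq_single z]
    · simp
    · intro b _ hb
      have : (z : K) ≠ (b : K) := fun h => hb (Subtype.ext h.symm)
      simp [this]
    · simp
  -- kernel equivalence
  have hkerbij : Function.Bijective (Ev'.comp (LinearMap.ker (T : C(K, ℂ) →ₗ[ℂ] C(K, ℂ))).subtype) := by
    constructor
    · intro f g hfg
      have hfg' : ∀ z : Z, (f : C(K,ℂ)) (φ (z:K)) = (g : C(K,ℂ)) (φ (z:K)) := by
        intro z
        exact congrFun hfg z
      apply Subtype.ext
      ext x
      set k := φ.symm x with hk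
      have hx : φ k = x := φ.apply_symm_apply x
      by_cases hwk : w k = 0
      · have := hfg' ⟨k, hwk⟩
        simpa [hx] using this
      · have h1 : (T (f : C(K,ℂ))) k = 0 := by have := congrArg (fun F : C(K,ℂ) => F k) (LinearMap.mem_ker.mp f.2); exact this
        have h2 : (T (g : C(K,ℂ))) k = 0 := by have := congrArg (fun F : C(K,ℂ) => F k) (LinearMap.mem_ker.mp g.2); exact this
        rw [hT] at h1 h2
        rw [hx] at h1 h2
        have e1 : (f : C(K,ℂ)) x = 0 := by
          rcases mul_eq_zero.mp h1 with h | h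
          · exact absurd h hwk
          · exact h
        have e2 : (g : C(K,ℂ)) x = 0 := by
          rcases mul_eq_zero.mp h2 with h | h
          · exact absurd h hwk
          · exact h
        rw [e1, e2]
    · intro v
      set f : C(K, ℂ) := ∑ z : Z, v z • ind' (φ (z : K)) (hisoφ z) with hf
      have hfker : f ∈ LinearMap.ker (T : C(K, ℂ) →ₗ[ℂ] C(K, ℂ)) := by
        rw [LinearMap.mem_ker]
        ext k
        rw [ContinuousLinearMap.coe_coe, hT]
        show w k * f (φ k) = (0 : C(K,ℂ)) k
        by_cases hwk : w k = 0
        · simp [hwk]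
        · have : f (φ k) = 0 := by
            rw [hf, sum_apply]
            apply Finset.sum_eq_zero
            intro z _
            have : φ k ≠ φ (z : K) := by
              intro h
              exact hwk (by
                have : k = (z : K) := φ.injective h
                rw [this]; exact z.2)
            simp [this]
          simp [this]
      refine ⟨⟨f, hfker⟩, ?_⟩
      funext z
      show f (φ (z:K)) = v z
      rw [hf, sum_apply]
      rw [Finset.sum_eq_single z]
      · simp
      · intro b _ hb
        have : φ (z : K) ≠ φ (b : K) := by
          intro h
          exact hb (Subtype.ext (φ.injective h)).symm
        simp [this]
      · simp
  -- closedness of range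
  have hclosed : IsClosed (LinearMap.range (T : C(K, ℂ) →ₗ[ℂ] C(K, ℂ)) : Set C(K, ℂ)) := by
    rw [hrange]
    have : (LinearMap.ker Ev : Set C(K,ℂ)) = ⋂ z : Z, {g : C(K,ℂ) | g (z:K) = 0} := by
      ext g
      simp [LinearMap.mem_ker, Ev, funext_iff, LinearMap.coe_mk, AddHom.coe_mk]
    rw [this]
    exact isClosed_iInter fun z =>
      isClosed_eq (continuous_eval_const (z:K)) continuous_const
  -- quotient equivalence
  have equivQ : (C(K, ℂ) ⧸ LinearMap.range (T : C(K, ℂ) →ₗ[ℂ] C(K, ℂ))) ≃ₗ[ℂ] (Z → ℂ) :=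
    (Submodule.quotEquivOfEq _ _ hrange).trans (Ev.quotKerEquivOfSurjective hEvSurj)
  have equivK : (LinearMap.ker (T : C(K, ℂ) →ₗ[ℂ] C(K, ℂ))) ≃ₗ[ℂ] (Z → ℂ) :=
    LinearEquiv.ofBijective _ hkerbij
  haveI : FiniteDimensional ℂ (LinearMap.ker (T : C(K, ℂ) →ₗ[ℂ] C(K, ℂ))) := Module.Finite.equiv equivK.symm
  haveI : FiniteDimensional ℂ (C(K, ℂ) ⧸ LinearMap.range (T : C(K, ℂ) →ₗ[ℂ] C(K, ℂ))) := Module.Finite.equiv equivQ.symm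
  refine ⟨hclosed, inferInstance, inferInstance, ?_⟩
  rw [equivK.finrank_eq, equivQ.finrank_eq]
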